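/- Let T be an Aronszajn tree, K a Kurepa tree with cofinal branches {b_α : α < ω₂}, and for each α < ω₂ let U_α = T ⊗ b_α ⊆ T ⊗ K. Then there exist α < β < ω₂ such that U_α ∩ U_β contains an infinite antichain of T ⊗ K; in particular the family {U_α : α < ω₂} does not witness strong non-saturation of T ⊗ K. -/

import Mathlib

noncomputable section

namespace AKST

/-- The first uncountable ordinal. -/
def ω1 : Ordinal.{0} := (Cardinal.aleph 1).ord

/-- The second uncountable ordinal. -/
def ω2 : Ordinal.{0} := (Cardinal.aleph 2).ord

/-- An `ω₁`-tree: a tree of height `ω₁` all of whose levels are countable. -/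
structure O1Tree where
  A : Type
  lt : A → A → Prop
  htf : A → Ordinal.{0}
  lt_trans' : ∀ {x y z}, lt x y → lt y z → lt x z
  ht_lt : ∀ {x y}, lt x y → htf x < htf y
  ht_lt_omega1 : ∀ x, htf x < ω1
  pred_ex : ∀ x, ∀ β < htf x, ∃ y, lt y x ∧ htf y = β
  pred_linear : ∀ {x y z}, lt y x → lt z x → lt y z ∨ y = z ∨ lt z y
  level_countable : ∀ α, {x | htf x = α}.Countable
  levels_nonempty : ∀ α < ω1, ∃ x, htf x = α

namespace O1Tree

/-- A chain: a pairwise comparable set. -/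
def Chain (T : O1Tree) (C : Set T.A) : Prop :=
  ∀ x ∈ C, ∀ y ∈ C, x = y ∨ T.lt x y ∨ T.lt y x

/-- An Aronszajn tree: an `ω₁`-tree with no uncountable chains. -/
def Aronszajn (T : O1Tree) : Prop := ∀ C : Set T.A, T.Chain C → C.Countable

/-- A downwards closed subtree. -/
def DCSubtree (T : O1Tree) (U : Set T.A) : Prop :=
  ∀ x ∈ U, ∀ y, T.lt y x → y ∈ U

/-- `U` and `W` are strongly almost disjoint: `U ∩ W` is a finite union of countable
chains. -/
def StronglyAD (T : O1Tree) (U W : Set T.A) : Prop :=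
  ∃ (n : ℕ) (C : Fin n → Set T.A),
    U ∩ W = ⋃ i, C i ∧ ∀ i, T.Chain (C i) ∧ (C i).Countable

/-- `T` is strongly non-saturated: there is a family of (at least) `ω₂`-many distinct
uncountable downwards closed subtrees of `T` which are pairwise strongly almost
disjoint. -/
def StronglyNonSaturated (T : O1Tree) : Prop :=
  ∃ Us : Ordinal → Set T.A,
    (∀ α < ω2, T.DCSubtree (Us α) ∧ ¬ (Us α).Countable) ∧
    (∀ α < ω2, ∀ β < ω2, α ≠ β → Us α ≠ Us β ∧ T.StronglyAD (Us α) (Us β))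

/-- A cofinal branch of `T`. -/
def CofinalBranch (T : O1Tree) (B : Set T.A) : Prop :=
  T.Chain B ∧ T.DCSubtree B ∧ ∀ α < ω1, ∃ x ∈ B, T.htf x = α

end O1Tree

end AKST

open AKST AKST.O1Tree

namespace AKSTProof

lemma omega1_isLimit : Order.IsSuccLimit ω1 :=
  Cardinal.isSuccLimit_ord (Cardinal.aleph0_le_aleph 1)

lemma omega1_pos : (0 : Ordinal) < ω1 := omega1_isLimit.pos

lemma omega1_lt_omega2 : ω1 < ω2 :=
  Cardinal.ord_lt_ord.mpr (Cardinal.aleph_lt_aleph.mpr one_lt_two)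

lemma countable_Iio_of_lt {o : Ordinal.{0}} (h : o < ω1) : (Set.Iio o).Countable := by
  rw [Cardinal.countable_iff_lt_aleph_one, Ordinal.mk_Iio_ordinal, Cardinal.lift_lt_aleph_one]
  exact Cardinal.lt_ord.mp h

lemma not_countable_Iio : ¬ (Set.Iio ω1).Countable := by
  rw [Cardinal.countable_iff_lt_aleph_one, Ordinal.mk_Iio_ordinal]
  have : (ω1).card = Cardinal.aleph 1 := Cardinal.card_ord _
  rw [this, Cardinal.lift_lt_aleph_one]
  exact lt_irrefl _

lemma not_countable_Ioo {δ : Ordinal} (hδ : δ < ω1) : ¬ (Set.Ioo δ ω1).Countable := by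
  intro h
  apply not_countable_Iio
  have hsub : Set.Iio ω1 ⊆ Set.Iio (Order.succ δ) ∪ Set.Ioo δ ω1 := by
    intro o ho
    rcases le_or_gt o δ with h' | h'
    · exact Or.inl (Order.lt_succ_iff.mpr h')
    · exact Or.inr ⟨h', ho⟩
  exact ((countable_Iio_of_lt (omega1_isLimit.succ_lt hδ)).union h).mono hsub

lemma lt_of_both_lt {S : O1Tree} {x y z : S.A} (hy : S.lt y x) (hz : S.lt z x)
    (h : S.htf y < S.htf z) : S.lt y z := by
  rcases S.pred_linear hy hz with h1 | h1 | h1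
  · exact h1
  · exact absurd h (by rw [h1]; exact lt_irrefl _)
  · exact absurd (S.ht_lt h1) (asymm h)

lemma eq_of_both_lt {S : O1Tree} {x y z : S.A} (hy : S.lt y x) (hz : S.lt z x)
    (h : S.htf y = S.htf z) : y = z := by
  rcases S.pred_linear hy hz with h1 | h1 | h1
  · exact absurd (S.ht_lt h1) (by rw [h]; exact lt_irrefl _)
  · exact h1
  · exact absurd (S.ht_lt h1) (by rw [h]; exact lt_irrefl _)

/-- A node with successors at every higher level below `ω1`. -/
def Large (S : O1Tree) (t : S.A) : Prop :=
  ∀ β, S.htf t < β → β < ω1 → ∃ y, S.htf y = β ∧ S.lt t y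

lemma large_of_lt {S : O1Tree} {x s : S.A} (hx : Large S x) (hsx : S.lt s x) :
    Large S s := by
  intro β h1 h2
  rcases lt_trichotomy β (S.htf x) with hc | hc | hc
  · obtain ⟨z, hz1, hz2⟩ := S.pred_ex x β hc
    exact ⟨z, hz2, lt_of_both_lt hsx hz1 (by rw [hz2]; exact h1)⟩
  · exact ⟨x, hc.symm, hsx⟩
  · obtain ⟨y, hy1, hy2⟩ := hx β hc h2
    exact ⟨y, hy1, S.lt_trans' hsx hy2⟩

/-- The key pigeonhole step: if a set `W` of nodes (closed под predecessors above
level `δ`) meets every level in `(δ, ω1)`, then at each such level there is a node of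
`W` with `W`-successors at all higher levels. -/
lemma exists_tall (S : O1Tree) (hfin : ∀ γ : Ordinal, {x : S.A | S.htf x = γ}.Finite)
    {δ : Ordinal} (W : Set S.A)
    (hWpred : ∀ x ∈ W, ∀ y, S.lt y x → δ < S.htf y → y ∈ W)
    (hWne : ∀ β, δ < β → β < ω1 → ∃ x ∈ W, S.htf x = β)
    {γ : Ordinal} (hγ1 : δ < γ) (hγ2 : γ < ω1) :
    ∃ x ∈ W, S.htf x = γ ∧ ∀ β, γ < β → β < ω1 →
      ∃ y ∈ W, S.htf y = β ∧ S.lt x y := by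
  by_contra hcon
  push_neg at hcon
  choose! g hg1 hg2 hg3 using hcon
  have hF : {x : S.A | x ∈ W ∧ S.htf x = γ}.Finite :=
    (hfin γ).subset (fun x hx => hx.2)
  set M : Ordinal := hF.toFinset.sup g ⊔ γ with hM_def
  have hγM : γ ≤ M := le_sup_right
  have hMlt : M < ω1 := by
    refine sup_lt_iff.mpr ⟨(Finset.sup_lt_iff omega1_pos).mpr (fun x hx => ?_), hγ2⟩
    rw [Set.Finite.mem_toFinset] at hx
    exact hg2 x hx.1 hx.2
  have hβ' : Order.succ M < ω1 := omega1_isLimit.succ_lt hMlt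
  obtain ⟨z, hzW, hzht⟩ := hWne (Order.succ M) (lt_of_lt_of_le hγ1 (hγM.trans (Order.le_succ M))) hβ'
  have hγz : γ < S.htf z := by rw [hzht]; exact lt_of_le_of_lt hγM (Order.lt_succ M)
  obtain ⟨y, hyz, hyht⟩ := S.pred_ex z γ hγz
  have hyW : y ∈ W := hWpred z hzW y hyz (by rw [hyht]; exact hγ1)
  have hymem : y ∈ hF.toFinset := by rw [Set.Finite.mem_toFinset]; exact ⟨hyW, hyht⟩
  have hgy1 : γ < g y := hg1 y hyW hyht
  have hgy2 : g y < ω1 := hg2 y hyW hyht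
  have hgyM : g y ≤ M := (Finset.le_sup hymem).trans le_sup_left
  have hgyz : g y < S.htf z := by rw [hzht]; exact lt_of_le_of_lt hgyM (Order.lt_succ M)
  obtain ⟨u, huz, huht⟩ := S.pred_ex z (g y) hgyz
  have huW : u ∈ W := hWpred z hzW u huz (by rw [huht]; exact lt_trans hγ1 hgy1)
  have hyu : S.lt y u := lt_of_both_lt hyz huz (by rw [hyht, huht]; exact hgy1)
  exact hg3 y hyW hyht u huW huht hyu

lemma large_mem_level (S : O1Tree) (hfin : ∀ γ : Ordinal, {x : S.A | S.htf x = γ}.Finite)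
    {γ : Ordinal} (h1 : (0 : Ordinal) < γ) (h2 : γ < ω1) :
    ∃ x, S.htf x = γ ∧ Large S x := by
  obtain ⟨x, _, hx2, hx3⟩ := exists_tall S hfin (δ := 0) Set.univ
    (fun _ _ _ _ _ => Set.mem_univ _)
    (fun β _ hβ => by obtain ⟨x, hx⟩ := S.levels_nonempty β hβ; exact ⟨x, Set.mem_univ _, hx⟩)
    h1 h2
  refine ⟨x, hx2, fun β hβ1 hβ2 => ?_⟩
  obtain ⟨y, _, hy2, hy3⟩ := hx3 β (by rw [← hx2]; exact hβ1) hβ2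
  exact ⟨y, hy2, hy3⟩

lemma large_above (S : O1Tree) (hfin : ∀ γ : Ordinal, {x : S.A | S.htf x = γ}.Finite)
    {t : S.A} (ht : Large S t) {γ : Ordinal} (h1 : S.htf t < γ) (h2 : γ < ω1) :
    ∃ x, S.htf x = γ ∧ S.lt t x ∧ Large S x := by
  obtain ⟨x, hx1, hx2, hx3⟩ := exists_tall S hfin (δ := S.htf t) {x | S.lt t x}
    (fun x hx y hyx hy => lt_of_both_lt (x := x) hx hyx hy)
    (fun β hβ1 hβ2 => by obtain ⟨y, hy1, hy2⟩ := ht β hβ1 hβ2; exact ⟨y, hy2, hy1⟩)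
    h1 h2
  refine ⟨x, hx2, hx1, fun β hβ1 hβ2 => ?_⟩
  obtain ⟨y, _, hy2, hy3⟩ := hx3 β (by rw [← hx2]; exact hβ1) hβ2
  exact ⟨y, hy2, hy3⟩

/-- Kurepa's theorem (the form we need): a tree of height `ω₁` all of whose levels are
finite has an uncountable chain; hence an Aronszajn tree has an infinite level. -/
lemma all_levels_finite_false (S : O1Tree) (hA : S.Aronszajn)
    (hfin : ∀ γ : Ordinal, {x : S.A | S.htf x = γ}.Finite) : False := by
  by_cases hsplit : ∃ t, Large S t ∧ ∀ x y, Large S x → Large S y → S.lt t x → S.lt t y →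
      S.htf x = S.htf y → x = y
  · -- Case A: above `t` large nodes are unique at every level, giving an uncountable chain
    obtain ⟨t, ht, huniq⟩ := hsplit
    set C : Set S.A := {x | Large S x ∧ S.lt t x} with hC_def
    have hchain : S.Chain C := by
      rintro x ⟨hx, htx⟩ y ⟨hy, hty⟩
      rcases lt_trichotomy (S.htf x) (S.htf y) with hc | hc | hc
      · obtain ⟨z, hz1, hz2⟩ := S.pred_ex y (S.htf x) hc
        have hz3 : Large S z := large_of_lt hy hz1
        have htz : S.lt t z := lt_of_both_lt hty hz1 (by rw [hz2]; exact S.ht_lt htx)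
        have hxz : x = z := huniq x z hx hz3 htx htz hz2.symm
        exact Or.inr (Or.inl (hxz ▸ hz1))
      · exact Or.inl (huniq x y hx hy htx hty hc)
      · obtain ⟨z, hz1, hz2⟩ := S.pred_ex x (S.htf y) hc
        have hz3 : Large S z := large_of_lt hx hz1
        have htz : S.lt t z := lt_of_both_lt htx hz1 (by rw [hz2]; exact S.ht_lt hty)
        have hyz : y = z := huniq y z hy hz3 hty htz hz2.symm
        exact Or.inr (Or.inr (hyz ▸ hz1))
    have hcct : C.Countable := hA C hchain
    have himg : Set.Ioo (S.htf t) ω1 ⊆ S.htf '' C := by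
      intro β hβ
      obtain ⟨x, hx1, hx2, hx3⟩ := large_above S hfin ht hβ.1 hβ.2
      exact ⟨x, ⟨hx3, hx2⟩, hx1⟩
    exact not_countable_Ioo (S.ht_lt_omega1 t) ((hcct.image S.htf).mono himg)
  · -- Case B: every large node splits, so level sizes grow without bound
    push_neg at hsplit
    choose! u v hLu hLv hht htu htv hne using
      (by
        intro t ht
        obtain ⟨x, y, hx, hy, h1, h2, h3, h4⟩ := hsplit t ht
        exact ⟨x, y, hx, hy, h3, h1, h2, h4⟩ :
        ∀ t, Large S t → ∃ x y, Large S x ∧ Large S y ∧ S.htf x = S.htf y ∧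
          S.lt t x ∧ S.lt t y ∧ x ≠ y)
    set P : ℕ → Ordinal → Prop := fun n γ => γ < ω1 ∧
      ∃ F : Finset S.A, (∀ x ∈ F, S.htf x = γ ∧ Large S x) ∧ n + 1 ≤ F.card with hP_def
    have hone : (1 : Ordinal) < ω1 := by
      have h := omega1_isLimit.succ_lt omega1_pos
      rwa [Ordinal.succ_zero] at h
    have base : P 0 1 := by
      obtain ⟨x, hx1, hx2⟩ := large_mem_level S hfin zero_lt_one hone
      exact ⟨hone, {x}, by simp [hx1, hx2], by simp⟩
    have step : ∀ n γ, P n γ → ∃ γ', P (n + 1) γ' := by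
      rintro n γ ⟨hγ, F, hF, hcard⟩
      classical
      set M : Ordinal := F.sup (fun t => S.htf (u t)) ⊔ γ with hM_def
      have hMlt : M < ω1 :=
        sup_lt_iff.mpr ⟨(Finset.sup_lt_iff omega1_pos).mpr (fun t _ => S.ht_lt_omega1 _), hγ⟩
      set γ' := Order.succ M with hγ'_def
      have hγ'lt : γ' < ω1 := omega1_isLimit.succ_lt hMlt
      have hext : ∀ t ∈ F, ∃ p : S.A × S.A,
          (S.htf p.1 = γ' ∧ S.lt t p.1 ∧ Large S p.1) ∧
          (S.htf p.2 = γ' ∧ S.lt t p.2 ∧ Large S p.2) ∧ p.1 ≠ p.2 := by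
        intro t htF
        have hLt : Large S t := (hF t htF).2
        have h1 : S.htf (u t) < γ' := by
          have hle : S.htf (u t) ≤ M :=
            le_trans (Finset.le_sup (f := fun t => S.htf (u t)) htF) le_sup_left
          exact lt_of_le_of_lt hle (Order.lt_succ M)
        have h2 : S.htf (v t) < γ' := by rw [← hht t hLt]; exact h1
        obtain ⟨x, hx1, hx2, hx3⟩ := large_above S hfin (hLu t hLt) h1 hγ'lt
        obtain ⟨y, hy1, hy2, hy3⟩ := large_above S hfin (hLv t hLt) h2 hγ'lt
        refine ⟨(x, y), ⟨hx1, S.lt_trans' (htu t hLt) hx2, hx3⟩,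
          ⟨hy1, S.lt_trans' (htv t hLt) hy2, hy3⟩, ?_⟩
        intro hxy
        have hxy' : x = y := hxy
        rw [← hxy'] at hy2
        exact hne t hLt (eq_of_both_lt hx2 hy2 (hht t hLt))
      choose! p hp1 hp2 hp3 using hext
      have hdisj : ∀ t ∈ F, ∀ t' ∈ F, t ≠ t' →
          Disjoint ({(p t).1, (p t).2} : Finset S.A) {(p t').1, (p t').2} := by
        intro t htF t' ht'F htt'
        rw [Finset.disjoint_left]
        intro w hw hw'
        have hhtt : S.htf t = S.htf t' := by rw [(hF t htF).1, (hF t' ht'F).1]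
        have hltw : S.lt t w := by
          rcases Finset.mem_insert.mp hw with h | h
          · exact h ▸ (hp1 t htF).2.1
          · exact (Finset.mem_singleton.mp h) ▸ (hp2 t htF).2.1
        have hltw' : S.lt t' w := by
          rcases Finset.mem_insert.mp hw' with h | h
          · exact h ▸ (hp1 t' ht'F).2.1
          · exact (Finset.mem_singleton.mp h) ▸ (hp2 t' ht'F).2.1
        exact htt' (eq_of_both_lt hltw hltw' hhtt)
      refine ⟨γ', hγ'lt, F.biUnion (fun t => {(p t).1, (p t).2}), ?_, ?_⟩
      · intro x hx
        rw [Finset.mem_biUnion] at hx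
        obtain ⟨t, htF, hxt⟩ := hx
        rcases Finset.mem_insert.mp hxt with h | h
        · exact h ▸ ⟨(hp1 t htF).1, (hp1 t htF).2.2⟩
        · exact (Finset.mem_singleton.mp h) ▸ ⟨(hp2 t htF).1, (hp2 t htF).2.2⟩
      · rw [Finset.card_biUnion hdisj]
        have hcards : ∀ t ∈ F, ({(p t).1, (p t).2} : Finset S.A).card = 2 :=
          fun t htF => Finset.card_pair (hp3 t htF)
        rw [Finset.sum_congr rfl hcards, Finset.sum_const, smul_eq_mul]
        omega
    -- iterate `step` and take a supremum
    have hseq : ∀ n, ∃ γ, P n γ := by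
      intro n
      induction n with
      | zero => exact ⟨1, base⟩
      | succ n ih => obtain ⟨γ, hγ⟩ := ih; exact step n γ hγ
    choose f hf using hseq
    have hflt : ∀ n, f n < ω1 := fun n => (hf n).1
    have hsup : (⨆ n, f n) < ω1 := by
      refine Ordinal.iSup_lt_ord ?_ hflt
      have hcof : (ω1).cof = Cardinal.aleph 1 := Cardinal.isRegular_aleph_one.cof_eq
      rw [hcof, Cardinal.mk_nat]
      exact Cardinal.aleph0_lt_aleph_one
    set β' := Order.succ (⨆ n, f n) with hβ'_def
    have hβ'lt : β' < ω1 := omega1_isLimit.succ_lt hsup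
    have hfβ' : ∀ n, f n < β' := fun n =>
      lt_of_le_of_lt (le_ciSup (f := f) ⟨ω1, by rintro x ⟨n, rfl⟩; exact (hflt n).le⟩ n)
        (Order.lt_succ _)
    -- every level's worth of large nodes injects into level β'
    have hbig : ∀ n : ℕ, n + 1 ≤ (hfin β').toFinset.card := by
      intro n
      obtain ⟨hlt, F, hF, hcard⟩ := hf n
      classical
      have hext : ∀ x ∈ F, ∃ y, S.htf y = β' ∧ S.lt x y :=
        fun x hx => by
          obtain ⟨y, hy1, hy2, _⟩ := large_above S hfin (hF x hx).2
            (by rw [(hF x hx).1]; exact hfβ' n) hβ'lt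
          exact ⟨y, hy1, hy2⟩
      choose! e he1 he2 using hext
      have hinj : Set.InjOn e F := by
        intro x hx y hy hxy
        have : S.lt x (e y) := hxy ▸ he2 x hx
        exact eq_of_both_lt this (he2 y hy) (by rw [(hF x hx).1, (hF y hy).1])
      calc n + 1 ≤ F.card := hcard
        _ = (F.image e).card := (Finset.card_image_of_injOn hinj).symm
        _ ≤ (hfin β').toFinset.card := by
            apply Finset.card_le_card
            intro y hy
            rw [Finset.mem_image] at hy
            obtain ⟨x, hx, rfl⟩ := hy
            rw [Set.Finite.mem_toFinset]
            exact he1 x hx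
    exact absurd (hbig ((hfin β').toFinset.card)) (by omega)

/-- Pigeonhole on a countable level: two of the `ω₂`-many branches pass through the
same node at level `γ`. -/
lemma branches_meet (K : O1Tree) (b : Ordinal → Set K.A)
    (hb : ∀ α < ω2, K.CofinalBranch (b α)) {γ : Ordinal} (hγ : γ < ω1) :
    ∃ α β k, α < β ∧ β < ω2 ∧ k ∈ b α ∧ k ∈ b β ∧ K.htf k = γ := by
  have hpick : ∀ α : Ordinal, α < ω2 → ∃ k, k ∈ b α ∧ K.htf k = γ :=
    fun α hα => (hb α hα).2.2 γ hγ
  have hKne : Nonempty K.A := by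
    obtain ⟨x, -⟩ := K.levels_nonempty 0 omega1_pos
    exact ⟨x⟩
  choose! g hg1 hg2 using hpick
  by_cases hinj : Set.InjOn g (Set.Iio ω2)
  · exfalso
    have hct : (Set.Iio (ω2 : Ordinal)).Countable := by
      refine Set.MapsTo.countable_of_injOn (t := {k : K.A | K.htf k = γ}) ?_ hinj
        (K.level_countable γ)
      intro α hα
      exact hg2 α hα
    exact not_countable_Iio (hct.mono (fun o ho => lt_trans ho omega1_lt_omega2))
  · rw [Set.InjOn] at hinj
    push_neg at hinj
    obtain ⟨α, hα, β, hβ, hgeq, hne⟩ := hinj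
    rcases hne.lt_or_gt with hlt | hlt
    · exact ⟨α, β, g α, hlt, hβ, hg1 α hα, hgeq ▸ hg1 β hβ, hg2 α hα⟩
    · exact ⟨β, α, g α, hlt, hα, hgeq.symm ▸ hg1 β hβ, hg1 α hα, hg2 α hα⟩

/-- In a chain, two elements of equal height are equal. -/
lemma chain_ht_eq {K : O1Tree} {B : Set K.A} (hB : K.Chain B) {x y : K.A}
    (hx : x ∈ B) (hy : y ∈ B) (h : K.htf x = K.htf y) : x = y := by
  rcases hB x hx y hy with h1 | h1 | h1
  · exact h1
  · exact absurd (K.ht_lt h1) (by rw [h]; exact lt_irrefl _)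
  · exact absurd (K.ht_lt h1) (by rw [h]; exact lt_irrefl _)

end AKSTProof

/-- for an Aronszajn tree `S` and a Kurepa tree `K` with distinct cofinal
branches `b α` (`α < ω₂`), setting `U_α = S ⊗ b_α ⊆ S ⊗ K`, there are `α < β < ω₂` such
that `U_α ∩ U_β` contains an infinite antichain of `S ⊗ K`; in particular the family
`{U_α}` does not witness strong non-saturation of `S ⊗ K`. -/
theorem stmt_15 (S K : O1Tree) (hA : S.Aronszajn)
    (b : Ordinal → Set K.A)
    (hb : ∀ α < ω2, K.CofinalBranch (b α))
    (hdist : ∀ α < ω2, ∀ β < ω2, α ≠ β → b α ≠ b β) :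
    ∃ α β, α < β ∧ β < ω2 ∧
      ∃ Z : Set (S.A × K.A),
        Z ⊆ ({p | S.htf p.1 = K.htf p.2 ∧ p.2 ∈ b α} ∩
             {p | S.htf p.1 = K.htf p.2 ∧ p.2 ∈ b β}) ∧
        Z.Infinite ∧
        (∀ p ∈ Z, ∀ q ∈ Z, p ≠ q →
          ¬(S.lt p.1 q.1 ∧ K.lt p.2 q.2) ∧ ¬(S.lt q.1 p.1 ∧ K.lt q.2 p.2)) ∧
        ¬ (∃ (n : ℕ) (C : Fin n → Set (S.A × K.A)),
            ({p | S.htf p.1 = K.htf p.2 ∧ p.2 ∈ b α} ∩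
             {p | S.htf p.1 = K.htf p.2 ∧ p.2 ∈ b β}) = ⋃ i, C i ∧
            ∀ i, (C i).Countable ∧
              ∀ p ∈ C i, ∀ q ∈ C i,
                p = q ∨ (S.lt p.1 q.1 ∧ K.lt p.2 q.2) ∨ (S.lt q.1 p.1 ∧ K.lt q.2 p.2)) := by
  classical
  -- Since `S` is Aronszajn, it has an infinite level.
  have hlev : ∃ γ : Ordinal, {x : S.A | S.htf x = γ}.Infinite := by
    by_contra h
    push_neg at h
    exact AKSTProof.all_levels_finite_false S hA (fun γ => h γ)
  obtain ⟨γ₀, hγ₀⟩ := hlev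
  have hγ₀lt : γ₀ < ω1 := by
    obtain ⟨x, hx⟩ := hγ₀.nonempty
    exact hx ▸ S.ht_lt_omega1 x
  have hγ'lt : Order.succ γ₀ < ω1 := AKSTProof.omega1_isLimit.succ_lt hγ₀lt
  obtain ⟨α, β, k, hαβ, hβ2, hkα, hkβ, hkht⟩ := AKSTProof.branches_meet K b hb hγ'lt
  have hα2 : α < ω2 := lt_trans hαβ hβ2
  obtain ⟨k₀, hk₀lt, hk₀ht⟩ := K.pred_ex k γ₀ (by rw [hkht]; exact Order.lt_succ γ₀)
  have hk₀α : k₀ ∈ b α := (hb α hα2).2.1 k hkα k₀ hk₀lt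
  have hk₀β : k₀ ∈ b β := (hb β hβ2).2.1 k hkβ k₀ hk₀lt
  set Z : Set (S.A × K.A) := {p : S.A × K.A | S.htf p.1 = γ₀ ∧ p.2 = k₀} with hZ_def
  have hZsub : Z ⊆ ({p : S.A × K.A | S.htf p.1 = K.htf p.2 ∧ p.2 ∈ b α} ∩
      {p | S.htf p.1 = K.htf p.2 ∧ p.2 ∈ b β}) := by
    rintro ⟨s, w⟩ ⟨hs, hw⟩
    dsimp only at hs hw
    subst hw
    exact ⟨⟨by rw [hs, hk₀ht], hk₀α⟩, ⟨by rw [hs, hk₀ht], hk₀β⟩⟩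
  have hZinf : Z.Infinite := by
    have hZeq : Z = (fun s => (s, k₀)) '' {x : S.A | S.htf x = γ₀} := by
      ext ⟨s, w⟩
      constructor
      · rintro ⟨hs, rfl⟩; exact ⟨s, hs, rfl⟩
      · rintro ⟨x, hx, heq⟩; cases heq; exact ⟨hx, rfl⟩
    rw [hZeq]
    exact hγ₀.image (Set.injOn_of_injective (fun a b h => (Prod.ext_iff.mp h).1))
  refine ⟨α, β, hαβ, hβ2, Z, hZsub, hZinf, ?_, ?_⟩
  · rintro ⟨s, w⟩ ⟨hs, hw⟩ ⟨s', w'⟩ ⟨hs', hw'⟩ hne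
    dsimp only at hs hw hs' hw'
    subst hw; subst hw'
    constructor
    · rintro ⟨_, hk⟩; exact absurd (K.ht_lt hk) (lt_irrefl _)
    · rintro ⟨_, hk⟩; exact absurd (K.ht_lt hk) (lt_irrefl _)
  · rintro ⟨n, C, hUn, hC⟩
    have hdecomp : Z = ⋃ i, Z ∩ C i := by
      ext p
      simp only [Set.mem_iUnion, Set.mem_inter_iff]
      constructor
      · intro hp
        obtain ⟨i, hi⟩ := Set.mem_iUnion.mp (hUn ▸ hZsub hp)
        exact ⟨i, hp, hi⟩
      · rintro ⟨i, hp, _⟩; exact hp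
    have hex : ∃ i, (Z ∩ C i).Infinite := by
      by_contra h
      push_neg at h
      exact hZinf (hdecomp ▸ Set.finite_iUnion h)
    obtain ⟨i, hi⟩ := hex
    obtain ⟨p, hp, q, hq, hpq⟩ := hi.nontrivial
    rcases (hC i).2 p hp.2 q hq.2 with h | h | h
    · exact hpq h
    · have hkk := K.ht_lt h.2
      rw [hp.1.2, hq.1.2] at hkk
      exact absurd hkk (lt_irrefl _)
    · have hkk := K.ht_lt h.2
      rw [hp.1.2, hq.1.2] at hkk
      exact absurd hkk (lt_irrefl _)
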